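/- arXiv:1211.5834 — 2 statements merged into one kernel-verified Lean document; each statement's English description precedes it below -/
import Mathlib

section
/- Let n ≥ 2 be an integer, x₀ ∈ ℝⁿ, 0 < ε < ε₀, and let Q : ℝⁿ → [0,∞] be measurable. Let q(r) := q_{x₀}(r) be the spherical mean of Q over S(x₀,r), and assume that r ↦ q(r) is measurable with 0 < q(r) < ∞ for almost every r ∈ (ε, ε₀). Set ψ(t) = 1/(t·q(t)^{1/(n−1)}). Then ∫_{{x : ε < |x−x₀| < ε₀}} Q(x)·ψ(|x−x₀|)ⁿ dm(x) = ω_{n−1}·∫_ε^{ε₀} ψ(t) dt, as an equality in [0,∞]. -/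
open MeasureTheory Set Filter ENNReal Metric

/-- The surface measure on the unit sphere of `ℝⁿ` (total mass `ω_{n-1}`). -/
noncomputable def sphereMeasure (n : ℕ) :
    Measure (Metric.sphere (0 : EuclideanSpace ℝ (Fin n)) 1) :=
  (volume : Measure (EuclideanSpace ℝ (Fin n))).toSphere

/-- The area `ω_{n-1}` of the unit sphere in `ℝⁿ`. -/
noncomputable def sphereArea (n : ℕ) : ℝ≥0∞ := sphereMeasure n Set.univ

/-- The spherical mean `q_{x₀}(r)` of `Q` over the sphere `S(x₀, r)`. -/
noncomputable def sphericalMean (n : ℕ) (Q : EuclideanSpace ℝ (Fin n) → ℝ≥0∞)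
    (x₀ : EuclideanSpace ℝ (Fin n)) (r : ℝ) : ℝ≥0∞ :=
  (∫⁻ θ : Metric.sphere (0 : EuclideanSpace ℝ (Fin n)) 1,
      Q (x₀ + r • (θ : EuclideanSpace ℝ (Fin n))) ∂(sphereMeasure n)) / sphereArea n

lemma key_alg (n : ℕ) (hn : 2 ≤ n) {r : ℝ} (hr : 0 < r) {a : ℝ≥0∞} (h0 : a ≠ 0) (ht : a ≠ ∞) :
    ENNReal.ofReal (r ^ (n - 1)) * (a * ((ENNReal.ofReal r * a ^ (1 / ((n : ℝ) - 1)))⁻¹) ^ n)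
      = (ENNReal.ofReal r * a ^ (1 / ((n : ℝ) - 1)))⁻¹ := by
  have h2 : (2 : ℝ) ≤ (n : ℝ) := by exact_mod_cast hn
  have hn1 : (n : ℝ) - 1 ≠ 0 := by linarith
  set R := ENNReal.ofReal r with hR
  set c := 1 / ((n : ℝ) - 1) with hc
  set b := a ^ c with hb
  have hR0 : R ≠ 0 := (ENNReal.ofReal_pos.mpr hr).ne'
  have hRt : R ≠ ∞ := ENNReal.ofReal_ne_top
  have hb0 : b ≠ 0 := (ENNReal.rpow_pos h0.bot_lt ht).ne'
  have hbt : b ≠ ∞ :=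
    ENNReal.rpow_ne_top_of_nonneg (by rw [hc]; exact one_div_nonneg.mpr (by linarith)) ht
  have hcn : c * (n : ℝ) = 1 + c := by rw [hc]; field_simp; ring
  have hbn : b ^ n = a * b := by
    rw [hb, ← ENNReal.rpow_natCast (a ^ c) n, ← ENNReal.rpow_mul, hcn,
      ENNReal.rpow_add 1 c h0 ht, ENNReal.rpow_one]
  have hRn : R ^ (n - 1) * (R ^ n)⁻¹ = R⁻¹ := by
    have h : R ^ n = R ^ (n - 1) * R := by rw [← pow_succ]; congr 1; omega
    rw [h, ENNReal.mul_inv (Or.inl (pow_ne_zero _ hR0)) (Or.inl (ENNReal.pow_ne_top hRt)),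
      ← mul_assoc, ENNReal.mul_inv_cancel (pow_ne_zero _ hR0) (ENNReal.pow_ne_top hRt), one_mul]
  have hab : a * (b ^ n)⁻¹ = b⁻¹ := by
    rw [hbn, ENNReal.mul_inv (Or.inl h0) (Or.inl ht), ← mul_assoc,
      ENNReal.mul_inv_cancel h0 ht, one_mul]
  calc ENNReal.ofReal (r ^ (n - 1)) * (a * ((R * b)⁻¹) ^ n)
      = (R ^ (n - 1) * (R ^ n)⁻¹) * (a * (b ^ n)⁻¹) := by
        rw [hR, ← ENNReal.ofReal_pow hr.le,
          ENNReal.mul_inv (Or.inl hR0) (Or.inl hRt), mul_pow, ENNReal.inv_pow, ENNReal.inv_pow]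
        ring
    _ = R⁻¹ * b⁻¹ := by rw [hRn, hab]
    _ = (R * b)⁻¹ := (ENNReal.mul_inv (Or.inl hR0) (Or.inl hRt)).symm

/-- With `ψ(t) = 1/(t·q(t)^{1/(n-1)})`, `q` the spherical mean of `Q` at `x₀`,
one has `∫_{ε<|x-x₀|<ε₀} Q(x) ψ(|x-x₀|)ⁿ dm(x) = ω_{n-1} ∫_ε^{ε₀} ψ(t) dt`. -/
theorem stmt2 (n : ℕ) (hn : 2 ≤ n) (x₀ : EuclideanSpace ℝ (Fin n)) (ε ε₀ : ℝ)
    (hε : 0 < ε) (hεε₀ : ε < ε₀)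
    (Q : EuclideanSpace ℝ (Fin n) → ℝ≥0∞) (hQ : Measurable Q)
    (q : ℝ → ℝ≥0∞) (hq : ∀ r : ℝ, q r = sphericalMean n Q x₀ r)
    (hqmeas : Measurable q)
    (hqfin : ∀ᵐ r ∂(volume.restrict (Set.Ioo ε ε₀)), 0 < q r ∧ q r < ∞)
    (ψ : ℝ → ℝ≥0∞)
    (hψ : ∀ t : ℝ, ψ t = (ENNReal.ofReal t * q t ^ (1 / ((n : ℝ) - 1)))⁻¹) :
    ∫⁻ x in {x : EuclideanSpace ℝ (Fin n) | ε < dist x x₀ ∧ dist x x₀ < ε₀},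
        Q x * ψ (dist x x₀) ^ n =
      sphereArea n * ∫⁻ t in Set.Ioo ε ε₀, ψ t := by
  classical
  haveI : Nonempty (Fin n) := ⟨⟨0, by omega⟩⟩
  have hdim : Module.finrank ℝ (EuclideanSpace ℝ (Fin n)) = n := finrank_euclideanSpace_fin
  -- ψ is measurable
  have hψeq : ψ = fun t => (ENNReal.ofReal t * q t ^ (1 / ((n : ℝ) - 1)))⁻¹ := funext hψ
  have hψm : Measurable ψ := by
    rw [hψeq]
    exact (measurable_id.ennreal_ofReal.mul (hqmeas.pow_const _)).inv
  -- the area ω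
  set ω := sphereArea n with hω
  have hωeq : ω = (volume : Measure (EuclideanSpace ℝ (Fin n))).toSphere Set.univ := by
    simp only [hω, sphereArea, sphereMeasure]
  have hωt : ω ≠ ∞ := by rw [hωeq]; exact measure_ne_top _ _
  have hω0 : ω ≠ 0 := by
    rw [hωeq, Measure.toSphere_apply_univ, hdim]
    exact mul_ne_zero (by simp; omega) (measure_ball_pos _ _ one_pos).ne'
  -- spherical mean identity
  have hQmean : ∀ r : ℝ,
      (∫⁻ θ : sphere (0 : EuclideanSpace ℝ (Fin n)) 1, Q (x₀ + r • (θ : EuclideanSpace ℝ (Fin n)))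
        ∂(volume : Measure (EuclideanSpace ℝ (Fin n))).toSphere) = q r * ω := by
    intro r
    rw [hq r]
    simp only [sphericalMean, sphereMeasure, ← hω]
    rw [ENNReal.div_mul_cancel hω0 hωt]
  -- auxiliary function
  set F : ℝ → ℝ≥0∞ := fun t => (Set.Ioo ε ε₀).indicator (fun t => ψ t ^ n) t with hF
  have hFm : Measurable F := (hψm.pow_const n).indicator measurableSet_Ioo
  have hd : Measurable fun x : EuclideanSpace ℝ (Fin n) => dist x x₀ :=
    (continuous_id.dist continuous_const).measurable
  have hS : MeasurableSet {x : EuclideanSpace ℝ (Fin n) | ε < dist x x₀ ∧ dist x x₀ < ε₀} :=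
    hd measurableSet_Ioo
  -- Step 1: as a full-space integral
  have step1 : ∫⁻ x in {x : EuclideanSpace ℝ (Fin n) | ε < dist x x₀ ∧ dist x x₀ < ε₀},
      Q x * ψ (dist x x₀) ^ n = ∫⁻ x, Q x * F (dist x x₀) := by
    rw [← lintegral_indicator hS]
    refine lintegral_congr fun x => ?_
    by_cases hx : ε < dist x x₀ ∧ dist x x₀ < ε₀
    · rw [Set.indicator_of_mem
        (show x ∈ {x : EuclideanSpace ℝ (Fin n) | ε < dist x x₀ ∧ dist x x₀ < ε₀} from hx)]
      simp only [hF]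
      rw [Set.indicator_of_mem (show dist x x₀ ∈ Set.Ioo ε ε₀ from hx)]
    · rw [Set.indicator_of_notMem
        (show x ∉ {x : EuclideanSpace ℝ (Fin n) | ε < dist x x₀ ∧ dist x x₀ < ε₀} from hx)]
      simp only [hF]
      rw [Set.indicator_of_notMem (show dist x x₀ ∉ Set.Ioo ε ε₀ from hx), mul_zero]
  -- Step 2: translate
  have step2 : (∫⁻ x, Q x * F (dist x x₀)) = ∫⁻ y, Q (x₀ + y) * F ‖y‖ := by
    rw [← lintegral_add_right_eq_self (fun y : EuclideanSpace ℝ (Fin n) => Q (x₀ + y) * F ‖y‖)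
      (-x₀)]
    refine lintegral_congr fun x => ?_
    have h1 : x₀ + (x + -x₀) = x := by abel
    have h2 : ‖x + -x₀‖ = dist x x₀ := by rw [dist_eq_norm, sub_eq_add_neg]
    rw [h1, h2]
  -- Step 3: to the subtype and polar coordinates
  have hmp := (volume : Measure (EuclideanSpace ℝ (Fin n))).measurePreserving_homeomorphUnitSphereProd
  rw [hdim] at hmp
  set G : sphere (0 : EuclideanSpace ℝ (Fin n)) 1 × Ioi (0 : ℝ) → ℝ≥0∞ :=
    fun p => Q (x₀ + (p.2 : ℝ) • (p.1 : EuclideanSpace ℝ (Fin n))) * F (p.2 : ℝ) with hG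
  have step3 : (∫⁻ y, Q (x₀ + y) * F ‖y‖)
      = ∫⁻ p, G p ∂(volume : Measure (EuclideanSpace ℝ (Fin n))).toSphere.prod
          (.volumeIoiPow (n - 1)) := by
    refine Eq.symm ?_
    calc ∫⁻ p, G p ∂(volume : Measure (EuclideanSpace ℝ (Fin n))).toSphere.prod
            (.volumeIoiPow (n - 1))
        = ∫⁻ y : ({(0 : EuclideanSpace ℝ (Fin n))}ᶜ : Set (EuclideanSpace ℝ (Fin n))),
            G (homeomorphUnitSphereProd (EuclideanSpace ℝ (Fin n)) y)
            ∂((volume : Measure (EuclideanSpace ℝ (Fin n))).comap Subtype.val) :=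
          (hmp.lintegral_comp_emb (Homeomorph.measurableEmbedding _) G).symm
      _ = ∫⁻ y : ({(0 : EuclideanSpace ℝ (Fin n))}ᶜ : Set (EuclideanSpace ℝ (Fin n))),
            Q (x₀ + (y : EuclideanSpace ℝ (Fin n))) * F ‖(y : EuclideanSpace ℝ (Fin n))‖
            ∂((volume : Measure (EuclideanSpace ℝ (Fin n))).comap Subtype.val) := by
          refine lintegral_congr fun y => ?_
          have hy0 : (y : EuclideanSpace ℝ (Fin n)) ≠ 0 := y.2
          have hne : ‖(y : EuclideanSpace ℝ (Fin n))‖ ≠ 0 := norm_ne_zero_iff.mpr hy0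
          simp only [hG, homeomorphUnitSphereProd_apply_fst_coe,
            homeomorphUnitSphereProd_apply_snd_coe, smul_smul, mul_inv_cancel₀ hne, one_smul]
      _ = ∫⁻ y in ({(0 : EuclideanSpace ℝ (Fin n))}ᶜ :
            Set (EuclideanSpace ℝ (Fin n))), Q (x₀ + y) * F ‖y‖ :=
          lintegral_subtype_comap (measurableSet_singleton _).compl
            (fun y => Q (x₀ + y) * F ‖y‖)
      _ = ∫⁻ y, Q (x₀ + y) * F ‖y‖ := by rw [restrict_compl_singleton]
  -- Step 4: Fubini
  have hGm : Measurable G := by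
    apply Measurable.mul
    · exact hQ.comp ((continuous_const.add ((continuous_subtype_val.comp
        continuous_snd).smul (continuous_subtype_val.comp continuous_fst))).measurable)
    · exact hFm.comp (continuous_subtype_val.comp continuous_snd).measurable
  have step4 : (∫⁻ p, G p ∂(volume : Measure (EuclideanSpace ℝ (Fin n))).toSphere.prod
        (.volumeIoiPow (n - 1)))
      = ∫⁻ r : Ioi (0 : ℝ), (q (r : ℝ) * ω) * F (r : ℝ) ∂(.volumeIoiPow (n - 1)) := by
    rw [lintegral_prod_symm G hGm.aemeasurable]
    refine lintegral_congr fun r => ?_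
    have hQm' : Measurable fun θ : sphere (0 : EuclideanSpace ℝ (Fin n)) 1 =>
        Q (x₀ + (r : ℝ) • (θ : EuclideanSpace ℝ (Fin n))) :=
      hQ.comp ((continuous_const.add (continuous_subtype_val.const_smul (r : ℝ)) :
        Continuous fun θ : sphere (0 : EuclideanSpace ℝ (Fin n)) 1 =>
          x₀ + (r : ℝ) • (θ : EuclideanSpace ℝ (Fin n))).measurable)
    rw [show (fun θ : sphere (0 : EuclideanSpace ℝ (Fin n)) 1 => G (θ, r))
        = fun θ : sphere (0 : EuclideanSpace ℝ (Fin n)) 1 =>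
            Q (x₀ + (r : ℝ) • (θ : EuclideanSpace ℝ (Fin n))) * F (r : ℝ) from rfl]
    rw [lintegral_mul_const _ hQm', hQmean]
  -- Step 5: unfold volumeIoiPow
  have hgm : Measurable fun t : ℝ => (q t * ω) * F t :=
    ((hqmeas.mul_const ω).mul hFm)
  have step5 : (∫⁻ r : Ioi (0 : ℝ), (q (r : ℝ) * ω) * F (r : ℝ) ∂(.volumeIoiPow (n - 1)))
      = ∫⁻ t in Ioi (0 : ℝ), ENNReal.ofReal (t ^ (n - 1)) * ((q t * ω) * F t) := by
    have hgm2 : Measurable fun r : Ioi (0 : ℝ) => (q (r : ℝ) * ω) * F (r : ℝ) :=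
      hgm.comp measurable_subtype_coe
    simp only [Measure.volumeIoiPow]
    rw [lintegral_withDensity_eq_lintegral_mul _
      ((measurable_subtype_coe.pow_const _).ennreal_ofReal) hgm2]
    rw [← lintegral_subtype_comap measurableSet_Ioi
      (fun t => ENNReal.ofReal (t ^ (n - 1)) * ((q t * ω) * F t))]
    rfl
  -- Step 6: restrict to Ioo and simplify pointwise
  have hIoo : Set.Ioo ε ε₀ ∩ Set.Ioi (0 : ℝ) = Set.Ioo ε ε₀ :=
    Set.inter_eq_left.mpr fun x hx => lt_trans hε hx.1
  have step6 : (∫⁻ t in Ioi (0 : ℝ), ENNReal.ofReal (t ^ (n - 1)) * ((q t * ω) * F t))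
      = ∫⁻ t in Set.Ioo ε ε₀, ENNReal.ofReal (t ^ (n - 1)) * ((q t * ω) * ψ t ^ n) := by
    have hind : ∀ t : ℝ, ENNReal.ofReal (t ^ (n - 1)) * ((q t * ω) * F t)
        = (Set.Ioo ε ε₀).indicator
            (fun t => ENNReal.ofReal (t ^ (n - 1)) * ((q t * ω) * ψ t ^ n)) t := by
      intro t
      by_cases ht : t ∈ Set.Ioo ε ε₀
      · simp only [hF]
        rw [Set.indicator_of_mem ht, Set.indicator_of_mem ht]
      · simp only [hF]
        rw [Set.indicator_of_notMem ht, Set.indicator_of_notMem ht, mul_zero, mul_zero]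
    simp only [hind]
    rw [lintegral_indicator measurableSet_Ioo, Measure.restrict_restrict measurableSet_Ioo,
      hIoo]
  -- Step 7: a.e. pointwise algebra
  have step7 : (∫⁻ t in Set.Ioo ε ε₀, ENNReal.ofReal (t ^ (n - 1)) * ((q t * ω) * ψ t ^ n))
      = ∫⁻ t in Set.Ioo ε ε₀, ω * ψ t := by
    refine lintegral_congr_ae ?_
    filter_upwards [hqfin, ae_restrict_mem measurableSet_Ioo] with t hqt ht
    have htpos : 0 < t := lt_trans hε ht.1
    have key := key_alg n hn htpos hqt.1.ne' hqt.2.ne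
    rw [hψ t]
    calc ENNReal.ofReal (t ^ (n - 1))
          * ((q t * ω) * ((ENNReal.ofReal t * q t ^ (1 / ((n : ℝ) - 1)))⁻¹) ^ n)
        = ω * (ENNReal.ofReal (t ^ (n - 1))
            * (q t * ((ENNReal.ofReal t * q t ^ (1 / ((n : ℝ) - 1)))⁻¹) ^ n)) := by ring
      _ = ω * (ENNReal.ofReal t * q t ^ (1 / ((n : ℝ) - 1)))⁻¹ := by rw [key]
  rw [step1, step2, step3, step4, step5, step6, step7, lintegral_const_mul ω hψm, hω]
end

section
/- With the construction of the maps f_m from a measurable Q : 𝔹ⁿ → [1,∞] whose spherical mean q₀ at the origin satisfies 1 ≤ q₀(r) < ∞ for almost every r ∈ (0,1): if in addition ∫_0^{ε₀} dt/(t·q₀(t)^{1/(n−1)}) < ∞ for some ε₀ ∈ (0,1), then there exists σ > 0 such that for every integer m ≥ 2 and every x ∈ 𝔹ⁿ with |x| = 1/m one has |f_m(x) − f_m(0)| = ρ_m(1/m) ≥ σ; consequently, the family {f_m : m ≥ 2} is not equicontinuous at the origin. -/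
open MeasureTheory Set Filter Metric ENNReal

/-- `exp(-a)` for `a ∈ [0,∞]`, with the convention `exp(-∞) = 0`. -/
noncomputable def expNeg (a : ℝ≥0∞) : ℝ := if a = ⊤ then 0 else Real.exp (-a.toReal)

/-- The spherical mean of `Q` at the origin over the sphere of radius `r`. -/
noncomputable def sphericalMean₀ (n : ℕ) (Q : EuclideanSpace ℝ (Fin n) → ℝ≥0∞) (r : ℝ) :
    ℝ≥0∞ :=
  (∫⁻ θ : Metric.sphere (0 : EuclideanSpace ℝ (Fin n)) 1,
      Q (r • (θ : EuclideanSpace ℝ (Fin n))) ∂(sphereMeasure n)) / sphereArea n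

/-- `q_{0,m}(r) = q₀(r)` for `r > 1/m` and `= 1` for `r ≤ 1/m`. -/
noncomputable def qZeroM (m : ℕ) (q₀ : ℝ → ℝ≥0∞) (r : ℝ) : ℝ≥0∞ :=
  if 1 / (m : ℝ) < r then q₀ r else 1

/-- `ρ_m(r) = exp(-∫_r^1 dt/(t·q_{0,m}(t)^{1/(n-1)}))`. -/
noncomputable def rhoM (n m : ℕ) (q₀ : ℝ → ℝ≥0∞) (r : ℝ) : ℝ :=
  expNeg (∫⁻ t in Set.Ioo r 1,
    (ENNReal.ofReal t * qZeroM m q₀ t ^ (1 / ((n : ℝ) - 1)))⁻¹)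

open Classical in
/-- `f_m(x) = ρ_m(|x|)·x/|x|` for `x ≠ 0`, `f_m(0) = 0`. -/
noncomputable def fM (n m : ℕ) (q₀ : ℝ → ℝ≥0∞) (x : EuclideanSpace ℝ (Fin n)) :
    EuclideanSpace ℝ (Fin n) :=
  if x = 0 then 0 else (rhoM n m q₀ ‖x‖ / ‖x‖) • x

lemma expNeg_nonneg (a : ℝ≥0∞) : 0 ≤ expNeg a := by
  unfold expNeg; split
  · rfl
  · exact (Real.exp_pos _).le

/-- If moreover `∫_0^{ε₀} dt/(t·q₀(t)^{1/(n-1)}) < ∞` for some `ε₀ ∈ (0,1)`, then there is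
`σ > 0` such that for every `m ≥ 2` and every `x` with `|x| = 1/m` one has
`|f_m(x) - f_m(0)| = ρ_m(1/m) ≥ σ`; consequently the family `{f_m : m ≥ 2}` is not
equicontinuous at the origin. -/
theorem stmt6 (n : ℕ) (hn : 2 ≤ n)
    (Q : EuclideanSpace ℝ (Fin n) → ℝ≥0∞) (hQmeas : Measurable Q)
    (hQ1 : ∀ x ∈ Metric.ball (0 : EuclideanSpace ℝ (Fin n)) 1, 1 ≤ Q x)
    (q₀ : ℝ → ℝ≥0∞) (hq₀def : ∀ r : ℝ, q₀ r = sphericalMean₀ n Q r)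
    (hq₀meas : Measurable q₀)
    (hq₀ae : ∀ᵐ r ∂(volume.restrict (Set.Ioo (0:ℝ) 1)), 1 ≤ q₀ r ∧ q₀ r < ⊤)
    (ε₀ : ℝ) (hε₀ : ε₀ ∈ Set.Ioo (0:ℝ) 1)
    (hfin : ∫⁻ t in Set.Ioo (0:ℝ) ε₀,
      (ENNReal.ofReal t * q₀ t ^ (1 / ((n : ℝ) - 1)))⁻¹ < ⊤) :
    (∃ σ : ℝ, 0 < σ ∧ ∀ m : ℕ, 2 ≤ m →
      ∀ x : EuclideanSpace ℝ (Fin n), ‖x‖ = 1 / (m : ℝ) →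
        ‖fM n m q₀ x - fM n m q₀ 0‖ = rhoM n m q₀ (1 / (m : ℝ)) ∧
          σ ≤ rhoM n m q₀ (1 / (m : ℝ))) ∧
    ¬ (∀ σ : ℝ, 0 < σ → ∃ Δ : ℝ, 0 < Δ ∧ ∀ m : ℕ, 2 ≤ m →
        ∀ x ∈ Metric.ball (0 : EuclideanSpace ℝ (Fin n)) 1, ‖x - 0‖ < Δ →
          ‖fM n m q₀ x - fM n m q₀ 0‖ < σ) := by
  obtain ⟨hε₀0, hε₀1⟩ := hε₀
  set e : ℝ := 1 / ((n : ℝ) - 1) with he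
  have hn2 : (2 : ℝ) ≤ (n : ℝ) := by exact_mod_cast hn
  have he0 : 0 ≤ e := by
    apply div_nonneg one_pos.le; linarith
  set g : ℝ → ℝ≥0∞ := fun t => (ENNReal.ofReal t * q₀ t ^ e)⁻¹ with hg
  -- a.e. lower bound for q₀ on Ico ε₀ 1
  have hG : ∀ᵐ t ∂(volume : Measure ℝ), t ∈ Set.Ioo (0:ℝ) 1 → (1 ≤ q₀ t ∧ q₀ t < ⊤) :=
    (ae_restrict_iff' measurableSet_Ioo).mp hq₀ae
  have hne : ∀ᵐ t ∂(volume : Measure ℝ), t ≠ ε₀ := by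
    have : (volume : Measure ℝ) {ε₀} = 0 := Real.volume_singleton
    exact ae_iff.mpr (by simpa using this)
  have hIco : ∀ᵐ t ∂(volume : Measure ℝ), t ∈ Set.Ico ε₀ 1 → 1 ≤ q₀ t := by
    filter_upwards [hG, hne] with t h1 h2 ht
    exact (h1 ⟨lt_of_le_of_lt' (lt_of_le_of_ne ht.1 (Ne.symm h2)).le hε₀0, ht.2⟩).1
  -- bound for the integral over Ico ε₀ 1
  have hbound : ∫⁻ t in Set.Ico ε₀ 1, g t ≤ (ENNReal.ofReal ε₀)⁻¹ * volume (Set.Ico ε₀ 1) := by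
    have : ∫⁻ t in Set.Ico ε₀ 1, g t ≤ ∫⁻ _ in Set.Ico ε₀ 1, (ENNReal.ofReal ε₀)⁻¹ := by
      apply lintegral_mono_ae
      rw [ae_restrict_iff' measurableSet_Ico]
      filter_upwards [hIco] with t hq ht
      have h1 : (1:ℝ≥0∞) ≤ q₀ t ^ e := by
        calc (1:ℝ≥0∞) = 1 ^ e := (ENNReal.one_rpow e).symm
        _ ≤ q₀ t ^ e := ENNReal.rpow_le_rpow (hq ht) he0
      have h2 : ENNReal.ofReal ε₀ ≤ ENNReal.ofReal t * q₀ t ^ e := by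
        calc ENNReal.ofReal ε₀ = ENNReal.ofReal ε₀ * 1 := (mul_one _).symm
        _ ≤ ENNReal.ofReal t * q₀ t ^ e :=
          mul_le_mul' (ENNReal.ofReal_le_ofReal ht.1) h1
      exact ENNReal.inv_le_inv' h2
    simpa [lintegral_const, Measure.restrict_apply] using this
  set C : ℝ≥0∞ := (∫⁻ t in Set.Ioo (0:ℝ) ε₀, g t) + (ENNReal.ofReal ε₀)⁻¹ * volume (Set.Ico ε₀ 1)
    with hC
  have hCfin : C ≠ ⊤ := by
    apply ENNReal.add_ne_top.mpr
    constructor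
    · exact hfin.ne
    · apply ENNReal.mul_ne_top
      · simp [ENNReal.inv_ne_top]
        exact hε₀0
      · simp [Real.volume_Ico]
  -- uniform bound on the integrals defining rhoM at 1/m
  have hIm : ∀ m : ℕ, 2 ≤ m →
      (∫⁻ t in Set.Ioo (1/(m:ℝ)) 1,
        (ENNReal.ofReal t * qZeroM m q₀ t ^ e)⁻¹) ≤ C := by
    intro m hm
    have hmpos : (0:ℝ) < (m:ℝ) := by positivity
    have hcongr : (∫⁻ t in Set.Ioo (1/(m:ℝ)) 1,
        (ENNReal.ofReal t * qZeroM m q₀ t ^ e)⁻¹) = ∫⁻ t in Set.Ioo (1/(m:ℝ)) 1, g t := by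
      apply setLIntegral_congr_fun measurableSet_Ioo
      intro t ht
      simp only [qZeroM, hg]
      rw [if_pos ht.1]
    rw [hcongr]
    have hsub : Set.Ioo (1/(m:ℝ)) 1 ⊆ Set.Ioo (0:ℝ) ε₀ ∪ Set.Ico ε₀ 1 := by
      intro t ht
      rcases lt_or_ge t ε₀ with h | h
      · exact Or.inl ⟨lt_trans (by positivity) ht.1, h⟩
      · exact Or.inr ⟨h, ht.2⟩
    calc ∫⁻ t in Set.Ioo (1/(m:ℝ)) 1, g t
        ≤ ∫⁻ t in Set.Ioo (0:ℝ) ε₀ ∪ Set.Ico ε₀ 1, g t := lintegral_mono_set hsub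
      _ ≤ (∫⁻ t in Set.Ioo (0:ℝ) ε₀, g t) + ∫⁻ t in Set.Ico ε₀ 1, g t := lintegral_union_le _ _ _
      _ ≤ C := by rw [hC]; exact add_le_add le_rfl hbound
  set σ₀ : ℝ := Real.exp (-C.toReal) with hσ₀
  have hσ₀pos : 0 < σ₀ := Real.exp_pos _
  have hrho : ∀ m : ℕ, 2 ≤ m → σ₀ ≤ rhoM n m q₀ (1/(m:ℝ)) := by
    intro m hm
    unfold rhoM
    set I := ∫⁻ t in Set.Ioo (1/(m:ℝ)) 1,
      (ENNReal.ofReal t * qZeroM m q₀ t ^ (1 / ((n : ℝ) - 1)))⁻¹ with hI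
    have hIle : I ≤ C := hIm m hm
    have hIne : I ≠ ⊤ := (lt_of_le_of_lt hIle hCfin.lt_top).ne
    rw [expNeg, if_neg hIne]
    apply Real.exp_le_exp.mpr
    simp only [neg_le_neg_iff]
    exact ENNReal.toReal_mono hCfin hIle
  have hmain : ∀ m : ℕ, 2 ≤ m →
      ∀ x : EuclideanSpace ℝ (Fin n), ‖x‖ = 1 / (m : ℝ) →
        ‖fM n m q₀ x - fM n m q₀ 0‖ = rhoM n m q₀ (1 / (m : ℝ)) ∧
          σ₀ ≤ rhoM n m q₀ (1 / (m : ℝ)) := by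
    intro m hm x hx
    have hmpos : (0:ℝ) < (m:ℝ) := by positivity
    have hxnorm : (0:ℝ) < ‖x‖ := by rw [hx]; positivity
    have hx0 : x ≠ 0 := by
      intro h; rw [h] at hxnorm; simp at hxnorm
    constructor
    · have hrn : (0:ℝ) ≤ rhoM n m q₀ (1/(m:ℝ)) := expNeg_nonneg _
      rw [fM, fM, if_neg hx0, if_pos rfl, sub_zero, hx, norm_smul, Real.norm_eq_abs,
        abs_div, abs_of_nonneg hrn, abs_of_pos (show (0:ℝ) < 1/(m:ℝ) by positivity), hx,
        div_mul_cancel₀]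
      positivity
    · exact hrho m hm
  refine ⟨⟨σ₀, hσ₀pos, hmain⟩, ?_⟩
  intro hcon
  obtain ⟨Δ, hΔpos, hΔ⟩ := hcon σ₀ hσ₀pos
  obtain ⟨k, hk⟩ := exists_nat_gt (1/Δ)
  set m := max k 2 with hmdef
  have hm2 : 2 ≤ m := le_max_right _ _
  have hmpos : (0:ℝ) < (m:ℝ) := by positivity
  have hkm : (1/Δ : ℝ) < m := lt_of_lt_of_le hk (by exact_mod_cast le_max_left k 2)
  have h1m : 1/(m:ℝ) < Δ := by
    rw [div_lt_iff₀ hmpos]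
    rw [div_lt_iff₀ hΔpos] at hkm
    linarith [hkm]
  have h1m1 : 1/(m:ℝ) < 1 := by
    rw [div_lt_one hmpos]; exact_mod_cast (by omega : 1 < m)
  have h1mpos : (0:ℝ) < 1/(m:ℝ) := by positivity
  set x : EuclideanSpace ℝ (Fin n) :=
    (1/(m:ℝ)) • EuclideanSpace.single (⟨0, by omega⟩ : Fin n) (1:ℝ) with hxdef
  have hxnorm : ‖x‖ = 1/(m:ℝ) := by
    rw [hxdef, norm_smul, EuclideanSpace.norm_single]
    simp [abs_of_pos h1mpos]
  have hxball : x ∈ Metric.ball (0 : EuclideanSpace ℝ (Fin n)) 1 := by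
    rw [Metric.mem_ball, dist_zero_right, hxnorm]; exact h1m1
  have hxd : ‖x - 0‖ < Δ := by rw [sub_zero, hxnorm]; exact h1m
  have := hΔ m hm2 x hxball hxd
  have h2 := hmain m hm2 x hxnorm
  rw [h2.1] at this
  exact absurd this (not_lt.mpr h2.2)
end
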